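/- Let R be a finite index set, K_r ∈ M_d⊗M_d with blocks K_{r;hh'}, and suppose E(x) = Tr₂(Σ_{r∈R} K_r* x K_r) is D_e-preserving and identity-preserving (E(1⊗1)=1). Define P_{r;m,i} := Σ_{s∈R} (K_{s;mr} K_{s;mr}*)(i,i) for indices r, m, i. Then: (a) every P_{r;m,i} is a nonnegative real number; (b) Σ_{m,i} P_{r;m,i} = 1 for every r (P is a (d×d²)-stochastic matrix); (c) for all m, i: E(E_{mm}⊗E_{ii}) = Σ_r P_{r;m,i} E_{rr}. -/

import Mathlib

open Matrix BigOperators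

/-- Kronecker tensor product of two `d × d` matrices, indexed by `Fin d × Fin d`. -/
noncomputable def mtens {d : ℕ} (A B : Matrix (Fin d) (Fin d) ℂ) :
    Matrix (Fin d × Fin d) (Fin d × Fin d) ℂ :=
  fun p q => A p.1 q.1 * B p.2 q.2

/-- Partial trace over the second tensor factor. -/
noncomputable def ptr2 {d : ℕ} (X : Matrix (Fin d × Fin d) (Fin d × Fin d) ℂ) :
    Matrix (Fin d) (Fin d) ℂ :=
  fun i j => ∑ k, X (i, k) (j, k)

/-- The `(h,h')` block of `K ∈ M_d ⊗ M_d`. -/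
noncomputable def blk {d : ℕ} (K : Matrix (Fin d × Fin d) (Fin d × Fin d) ℂ) (h h' : Fin d) :
    Matrix (Fin d) (Fin d) ℂ :=
  fun a b => K (h, a) (h', b)

/-- The transition expectation `E(x) = Tr₂(Σ_r K_r* x K_r)`. -/
noncomputable def Emap {d : ℕ} {R : Type*} [Fintype R]
    (K : R → Matrix (Fin d × Fin d) (Fin d × Fin d) ℂ)
    (x : Matrix (Fin d × Fin d) (Fin d × Fin d) ℂ) : Matrix (Fin d) (Fin d) ℂ :=
  ptr2 (∑ r, (K r)ᴴ * x * K r)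

/-- `E` is `D_e`-preserving: it maps (tensor products of) diagonal matrices to
diagonal matrices. -/
def DePreserving {d : ℕ} {R : Type*} [Fintype R]
    (K : R → Matrix (Fin d × Fin d) (Fin d × Fin d) ℂ) : Prop :=
  ∀ a b : Matrix (Fin d) (Fin d) ℂ, a.IsDiag → b.IsDiag → (Emap K (mtens a b)).IsDiag

/-- `P_{r;m,i} := Σ_{s∈R} (K_{s;mr} K_{s;mr}*)(i,i)`. -/
noncomputable def Pval {d : ℕ} {R : Type*} [Fintype R]
    (K : R → Matrix (Fin d × Fin d) (Fin d × Fin d) ℂ) (r m i : Fin d) : ℂ :=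
  ∑ s, (blk (K s) m r * (blk (K s) m r)ᴴ) i i

/-- For a `D_e`-preserving identity-preserving transition expectation:
(a) the `P_{r;m,i}` are nonnegative reals, (b) `Σ_{m,i} P_{r;m,i} = 1` for every `r`,
(c) `E(E_{mm} ⊗ E_{ii}) = Σ_r P_{r;m,i} E_{rr}`. -/

lemma emap_std_aux {d : ℕ} {R : Type*} [Fintype R]
    (K : R → Matrix (Fin d × Fin d) (Fin d × Fin d) ℂ) (m i r r' : Fin d) :
    Emap K (mtens (Matrix.single m m 1) (Matrix.single i i 1)) r r' =
      ∑ s, ∑ a, (starRingEnd ℂ) (K s (m,i) (r,a)) * K s (m,i) (r',a) := by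
  simp [Emap, ptr2, mtens, Matrix.mul_apply, Matrix.conjTranspose_apply,
    Matrix.single, Fintype.sum_prod_type, Matrix.sum_apply,
    ite_and, mul_ite, ite_mul, Finset.sum_comm (γ := R)]

lemma pval_eq_aux {d : ℕ} {R : Type*} [Fintype R]
    (K : R → Matrix (Fin d × Fin d) (Fin d × Fin d) ℂ) (r m i : Fin d) :
    Pval K r m i = ∑ s, ∑ a, (starRingEnd ℂ) (K s (m,i) (r,a)) * K s (m,i) (r,a) := by
  simp [Pval, blk, Matrix.mul_apply, Matrix.conjTranspose_apply, mul_comm]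

lemma emap_one_aux {d : ℕ} {R : Type*} [Fintype R]
    (K : R → Matrix (Fin d × Fin d) (Fin d × Fin d) ℂ) (r : Fin d) :
    Emap K (mtens 1 1) r r =
      ∑ m, ∑ i, ∑ s, ∑ a, (starRingEnd ℂ) (K s (m,i) (r,a)) * K s (m,i) (r,a) := by
  simp only [Emap, ptr2, mtens, Matrix.mul_apply, Matrix.conjTranspose_apply,
    Matrix.sum_apply, Matrix.one_apply, Fintype.sum_prod_type,
    ite_and, mul_ite, ite_mul, mul_zero, zero_mul, mul_one, one_mul,
    Finset.sum_ite_eq, Finset.sum_ite_eq', Finset.mem_univ, if_true]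
  calc ∑ a : Fin d, ∑ s : R, ∑ m : Fin d, ∑ i : Fin d,
        (starRingEnd ℂ) (K s (m,i) (r,a)) * K s (m,i) (r,a)
      = ∑ s : R, ∑ a : Fin d, ∑ m : Fin d, ∑ i : Fin d,
        (starRingEnd ℂ) (K s (m,i) (r,a)) * K s (m,i) (r,a) := Finset.sum_comm
    _ = ∑ s : R, ∑ m : Fin d, ∑ a : Fin d, ∑ i : Fin d,
        (starRingEnd ℂ) (K s (m,i) (r,a)) * K s (m,i) (r,a) :=
        Finset.sum_congr rfl fun s _ => Finset.sum_comm
    _ = ∑ s : R, ∑ m : Fin d, ∑ i : Fin d, ∑ a : Fin d,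
        (starRingEnd ℂ) (K s (m,i) (r,a)) * K s (m,i) (r,a) :=
        Finset.sum_congr rfl fun s _ => Finset.sum_congr rfl fun m _ => Finset.sum_comm
    _ = ∑ m : Fin d, ∑ s : R, ∑ i : Fin d, ∑ a : Fin d,
        (starRingEnd ℂ) (K s (m,i) (r,a)) * K s (m,i) (r,a) := Finset.sum_comm
    _ = ∑ m : Fin d, ∑ i : Fin d, ∑ s : R, ∑ a : Fin d,
        (starRingEnd ℂ) (K s (m,i) (r,a)) * K s (m,i) (r,a) :=
        Finset.sum_congr rfl fun m _ => Finset.sum_comm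

lemma isDiag_std_aux {d : ℕ} (m : Fin d) : (Matrix.single m m (1:ℂ)).IsDiag := by
  intro a b h
  simp only [Matrix.single, Matrix.of_apply, ite_eq_right_iff]
  rintro ⟨rfl, rfl⟩; exact absurd rfl h

theorem stmt6 {d : ℕ} (hd : 1 ≤ d) {R : Type*} [Fintype R]
    (K : R → Matrix (Fin d × Fin d) (Fin d × Fin d) ℂ)
    (hpres : DePreserving K)
    (hunit : Emap K (mtens 1 1) = 1) :
    (∀ r m i : Fin d, ∃ t : ℝ, 0 ≤ t ∧ Pval K r m i = (t : ℂ)) ∧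
    (∀ r : Fin d, (∑ m, ∑ i, Pval K r m i) = 1) ∧
    (∀ m i : Fin d,
      Emap K (mtens (Matrix.single m m 1) (Matrix.single i i 1)) =
        ∑ r, Pval K r m i • Matrix.single r r 1) := by
  refine ⟨fun r m i => ?_, fun r => ?_, fun m i => ?_⟩
  · refine ⟨∑ s : R, ∑ a : Fin d, Complex.normSq (K s (m,i) (r,a)), ?_, ?_⟩
    · exact Finset.sum_nonneg fun s _ => Finset.sum_nonneg fun a _ => Complex.normSq_nonneg _
    · rw [pval_eq_aux]
      push_cast
      exact Finset.sum_congr rfl fun s _ => Finset.sum_congr rfl fun a _ => by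
        rw [Complex.normSq_eq_conj_mul_self]
  · have h1 := congrFun (congrFun hunit r) r
    rw [emap_one_aux] at h1
    simp only [Matrix.one_apply_eq] at h1
    rw [← h1]
    exact Finset.sum_congr rfl fun m _ => Finset.sum_congr rfl fun i _ => (pval_eq_aux K r m i)
  · ext r r'
    rw [emap_std_aux]
    have hrhs : (∑ x, Pval K x m i • Matrix.single x x (1:ℂ)) r r'
        = if r = r' then Pval K r m i else 0 := by
      simp only [Matrix.sum_apply, Matrix.smul_apply, Matrix.single, Matrix.of_apply,
        smul_ite, smul_zero, smul_eq_mul, mul_one, ite_and]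
      simp [mul_ite, Finset.sum_ite_eq']
    rw [hrhs]
    by_cases h : r = r'
    · subst h
      rw [if_pos rfl, ← pval_eq_aux]
    · rw [if_neg h, ← emap_std_aux]
      exact hpres _ _ (isDiag_std_aux m) (isDiag_std_aux i) h
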